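/- Let γ ∈ ℂ and R > 0 with 4π|γ| ≤ R. Then the map u ↦ u − γ·Log u, where Log is the principal branch of the complex logarithm, is injective on the set W = {u ∈ ℂ : |u| > R and (Re u > 0 or |Im u| > R)} (the region that contains a right half-plane and is bounded by the arc of the circle of radius R in the closed right half-plane together with the two horizontal half-lines Im u = ±R, Re u ≤ 0). -/

import Mathlib

open Complex Real

/-- Chord estimate: if `|u|, |v| ≥ R` then `|u - v| ≥ 2R|sin((arg u - arg v)/2)|`. -/
lemma chord_est {R : ℝ} (hR : 0 < R) {u v : ℂ}
    (hu : R ≤ ‖u‖) (hv : R ≤ ‖v‖) :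
    2 * R * |Real.sin ((Complex.arg u - Complex.arg v) / 2)| ≤ ‖u - v‖ := by
  have hu0 : u ≠ 0 := by
    intro h; rw [h] at hu; simp at hu; linarith
  have hv0 : v ≠ 0 := by
    intro h; rw [h] at hv; simp at hv; linarith
  have hune : ‖u‖ ≠ 0 := norm_ne_zero_iff.mpr hu0
  have hvne : ‖v‖ ≠ 0 := norm_ne_zero_iff.mpr hv0
  set a := Complex.arg u
  set b := Complex.arg v
  have hure : u.re = ‖u‖ * Real.cos a := by
    rw [Complex.cos_arg hu0]; field_simp
  have huim : u.im = ‖u‖ * Real.sin a := by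
    rw [Complex.sin_arg]; field_simp
  have hvre : v.re = ‖v‖ * Real.cos b := by
    rw [Complex.cos_arg hv0]; field_simp
  have hvim : v.im = ‖v‖ * Real.sin b := by
    rw [Complex.sin_arg]; field_simp
  have key : (‖u - v‖)^2
      = (‖u‖)^2 + (‖v‖)^2
        - 2 * (‖u‖ * ‖v‖) * Real.cos (a - b) := by
    rw [Complex.sq_norm, Complex.sq_norm, Complex.sq_norm, Complex.normSq_sub]
    have : (u * (starRingEnd ℂ) v).re = u.re * v.re + u.im * v.im := by
      simp [Complex.mul_re]
    rw [this, hure, huim, hvre, hvim, Real.cos_sub]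
    ring
  have hcos : Real.cos (a - b) = 1 - 2 * Real.sin ((a - b)/2)^2 := by
    have h1 := Real.sin_sq_add_cos_sq ((a - b)/2)
    have h2 := Real.cos_sq ((a - b)/2)
    rw [show 2 * ((a - b)/2) = a - b by ring] at h2
    linarith
  have hsin2 : (2 * R * |Real.sin ((a - b)/2)|)^2 ≤ (‖u - v‖)^2 := by
    rw [key, hcos]
    have hs : Real.sin ((a-b)/2)^2 ≤ 1 := by
      nlinarith [Real.sin_sq_add_cos_sq ((a - b)/2), sq_nonneg (Real.cos ((a-b)/2))]
    have habs : |Real.sin ((a - b)/2)|^2 = Real.sin ((a-b)/2)^2 := sq_abs _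
    nlinarith [sq_nonneg (‖u‖ - ‖v‖),
      mul_le_mul hu hv hR.le (le_trans hR.le hu),
      sq_nonneg (Real.sin ((a-b)/2))]
  have h1 : 0 ≤ 2 * R * |Real.sin ((a - b)/2)| := by positivity
  nlinarith [norm_nonneg (u - v)]

/-- Arg difference estimate on the region `W`. -/
lemma arg_diff_le {R : ℝ} (hR : 0 < R) {u v : ℂ}
    (hu : R < ‖u‖) (hu' : 0 < u.re ∨ R < |u.im|)
    (hv : R < ‖v‖) (hv' : 0 < v.re ∨ R < |v.im|) :
    Complex.arg u - Complex.arg v ≤ Real.pi / R * ‖u - v‖ := by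
  have hπ := Real.pi_pos
  set a := Complex.arg u with ha
  set b := Complex.arg v with hb
  rcases le_or_gt (a - b) 0 with h0 | h0
  · have : 0 ≤ Real.pi / R * ‖u - v‖ := by positivity
    linarith
  rcases le_or_gt (a - b) Real.pi with hle | hgt
  · -- chord case
    have hch := chord_est hR hu.le hv.le
    have hhalf : 0 ≤ (a - b) / 2 ∧ (a - b) / 2 ≤ Real.pi / 2 := ⟨by linarith, by linarith⟩
    have hsin : 2 / Real.pi * ((a - b)/2) ≤ Real.sin ((a - b)/2) :=
      Real.mul_le_sin hhalf.1 hhalf.2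
    have hsabs : Real.sin ((a - b)/2) ≤ |Real.sin ((a - b)/2)| := le_abs_self _
    have : 2 * R * (2 / Real.pi * ((a - b)/2)) ≤ ‖u - v‖ := by
      calc 2 * R * (2 / Real.pi * ((a - b)/2)) ≤ 2 * R * |Real.sin ((a - b)/2)| := by
            apply mul_le_mul_of_nonneg_left (le_trans hsin hsabs) (by positivity)
        _ ≤ _ := hch
    have h2 : 2 * R * (2 / Real.pi * ((a - b)/2)) = 2 * R / Real.pi * (a - b) := by ring
    rw [h2] at this
    have h5 : 2 * R * (a - b) ≤ Real.pi * ‖u - v‖ := by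
      have h6 := mul_le_mul_of_nonneg_left this hπ.le
      have he : Real.pi * (2 * R / Real.pi * (a - b)) = 2 * R * (a - b) := by
        field_simp
      linarith
    rw [div_mul_eq_mul_div, le_div_iff₀ hR]
    nlinarith [mul_nonneg hR.le h0.le]
  · -- a - b > π
    have hau : a ≤ Real.pi := Complex.arg_le_pi u
    have hbv : -Real.pi < b := Complex.neg_pi_lt_arg v
    have hb0 : b < 0 := by linarith
    have ha0 : 0 < a := by linarith
    have himv : v.im < 0 := Complex.arg_neg_iff.mp hb0
    have himu : 0 < u.im := by
      by_contra h
      push_neg at h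
      rcases lt_or_eq_of_le h with h' | h'
      · have : a < 0 := Complex.arg_neg_iff.mpr h'
        linarith
      · rcases hu' with hre | him
        · have : a = 0 := by
            apply Complex.arg_eq_zero_iff.mpr; constructor <;> simp [hre.le, h']
          linarith
        · rw [h'] at him; simp at him; linarith
    have hdist : u.im - v.im ≤ ‖u - v‖ := by
      calc u.im - v.im = (u - v).im := by simp
        _ ≤ |(u - v).im| := le_abs_self _
        _ ≤ ‖u - v‖ := Complex.abs_im_le_norm _
    -- bound a and -b separately by (π/R)·(vertical part)
    have hua : a ≤ Real.pi / R * u.im := by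
      rw [div_mul_eq_mul_div, le_div_iff₀ hR]
      rcases le_or_gt a (Real.pi / 2) with h | h
      · -- a ≤ π/2 : use sin
        have hs := Real.mul_le_sin ha0.le h
        rw [Complex.sin_arg] at hs
        have hub : (0:ℝ) < ‖u‖ := lt_trans hR hu
        have h1 : 2 / Real.pi * a * ‖u‖ ≤ u.im := by
          rw [mul_comm (2 / Real.pi * a) (‖u‖)]
          calc ‖u‖ * (2 / Real.pi * a) ≤ ‖u‖ * (u.im / ‖u‖) :=
                mul_le_mul_of_nonneg_left hs hub.le
            _ = u.im := by field_simp
        have h2 : 2 / Real.pi * a * R ≤ 2 / Real.pi * a * ‖u‖ := by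
          apply mul_le_mul_of_nonneg_left hu.le (by positivity)
        have h3 : Real.pi * (2 / Real.pi * a * R) = 2 * (a * R) := by field_simp
        nlinarith [mul_le_mul_of_nonneg_left (le_trans h2 h1) hπ.le,
          mul_nonneg hπ.le himu.le]
      · -- a > π/2 : then re u < 0, so u.im > R
        have hreu : u.re < 0 := by
          by_contra hc
          push_neg at hc
          have := Complex.arg_le_pi_div_two_iff.mpr (Or.inl hc)
          linarith
        have himuR : R < u.im := by
          rcases hu' with h' | h'
          · linarith
          · rwa [abs_of_pos himu] at h'
        nlinarith
    have hvb : -b ≤ Real.pi / R * (-v.im) := by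
      rw [div_mul_eq_mul_div, le_div_iff₀ hR]
      rcases le_or_gt (-b) (Real.pi / 2) with h | h
      · have hs := Real.mul_le_sin (by linarith : (0:ℝ) ≤ -b) h
        rw [Real.sin_neg, Complex.sin_arg] at hs
        have hvb0 : (0:ℝ) < ‖v‖ := lt_trans hR hv
        have h1 : 2 / Real.pi * (-b) * ‖v‖ ≤ -v.im := by
          rw [mul_comm (2 / Real.pi * (-b)) (‖v‖)]
          calc ‖v‖ * (2 / Real.pi * (-b)) ≤ ‖v‖ * (-(v.im / ‖v‖)) :=
                mul_le_mul_of_nonneg_left hs hvb0.le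
            _ = -v.im := by field_simp [mul_comm]
        have h2 : 2 / Real.pi * (-b) * R ≤ 2 / Real.pi * (-b) * ‖v‖ := by
          apply mul_le_mul_of_nonneg_left hv.le (mul_nonneg (by positivity) (by linarith))
        have h3 : Real.pi * (2 / Real.pi * (-b) * R) = 2 * ((-b) * R) := by field_simp
        nlinarith [mul_le_mul_of_nonneg_left (le_trans h2 h1) hπ.le,
          mul_nonneg hπ.le (by linarith : (0:ℝ) ≤ -v.im)]
      · have hrev : v.re < 0 := by
          by_contra hc
          push_neg at hc
          have := Complex.neg_pi_div_two_le_arg_iff.mpr (Or.inl hc)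
          linarith
        have himvR : R < -v.im := by
          rcases hv' with h' | h'
          · linarith
          · rwa [abs_of_neg himv] at h'
        nlinarith
    have heq2 : Real.pi / R * u.im + Real.pi / R * (-v.im)
        = Real.pi / R * (u.im - v.im) := by ring
    have hfin : a - b ≤ Real.pi / R * (u.im - v.im) := by linarith
    calc a - b ≤ Real.pi / R * (u.im - v.im) := hfin
      _ ≤ Real.pi / R * ‖u - v‖ := by
        apply mul_le_mul_of_nonneg_left hdist (by positivity)

/-- Log modulus estimate. -/
lemma log_abs_diff_le {R : ℝ} (hR : 0 < R) {u v : ℂ}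
    (hu : R ≤ ‖u‖) (hv : R ≤ ‖v‖) :
    |Real.log (‖u‖) - Real.log (‖v‖)| ≤ ‖u - v‖ / R := by
  have hu0 : 0 < ‖u‖ := lt_of_lt_of_le hR hu
  have hv0 : 0 < ‖v‖ := lt_of_lt_of_le hR hv
  have key : ∀ x y : ℝ, R ≤ x → R ≤ y → y ≤ x → Real.log x - Real.log y ≤ (x - y) / R := by
    intro x y hx hy hxy
    have hy0 : 0 < y := lt_of_lt_of_le hR hy
    have h1 : Real.log x - Real.log y = Real.log (x / y) := by
      rw [Real.log_div (by linarith) (by linarith)]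
    rw [h1]
    have hx0 : 0 < x := lt_of_lt_of_le hR hx
    have h2 : Real.log (x / y) ≤ x / y - 1 := Real.log_le_sub_one_of_pos (by positivity)
    have h3 : x / y - 1 = (x - y) / y := by field_simp
    have h4 : (x - y) / y ≤ (x - y) / R := by
      apply div_le_div_of_nonneg_left (by linarith) hR hy
    linarith
  have habs : |‖u‖ - ‖v‖| ≤ ‖u - v‖ :=
    abs_norm_sub_norm_le u v
  rcases le_total (‖v‖) (‖u‖) with h | h
  · have := key _ _ hu hv h
    rw [_root_.abs_of_nonneg (by
      have := Real.log_le_log hv0 h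
      linarith)]
    calc Real.log (‖u‖) - Real.log (‖v‖)
        ≤ (‖u‖ - ‖v‖) / R := this
      _ ≤ ‖u - v‖ / R := by
        apply div_le_div_of_nonneg_right _ hR.le
        calc ‖u‖ - ‖v‖ ≤ |‖u‖ - ‖v‖| := le_abs_self _
          _ ≤ _ := habs
  · have := key _ _ hv hu h
    rw [_root_.abs_of_nonpos (by
      have := Real.log_le_log hu0 h
      linarith)]
    calc -(Real.log (‖u‖) - Real.log (‖v‖))
        = Real.log (‖v‖) - Real.log (‖u‖) := by ring
      _ ≤ (‖v‖ - ‖u‖) / R := this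
      _ ≤ ‖u - v‖ / R := by
        apply div_le_div_of_nonneg_right _ hR.le
        calc ‖v‖ - ‖u‖ ≤ |‖u‖ - ‖v‖| := by
              rw [abs_sub_comm]; exact le_abs_self _
          _ ≤ _ := habs

/-- Let `γ ∈ ℂ` and `R > 0` with `4π|γ| ≤ R`. Then `u ↦ u − γ·Log u`, where
`Log` is the principal branch of the logarithm, is injective on the region
`W = {u : |u| > R and (Re u > 0 or |Im u| > R)}` (the region `W_π(R)` of the
paper). -/
theorem sub_gamma_log_injOn (γ : ℂ) (R : ℝ) (hR : 0 < R)
    (hγ : 4 * Real.pi * ‖γ‖ ≤ R) :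
    Set.InjOn (fun u : ℂ => u - γ * Complex.log u)
      {u : ℂ | R < ‖u‖ ∧ (0 < u.re ∨ R < |u.im|)} := by
  intro u hu v hv huv
  simp only [Set.mem_setOf_eq] at hu hv
  simp only at huv
  have hπ := Real.pi_pos
  -- u - v = γ (log u - log v)
  have heq : u - v = γ * (Complex.log u - Complex.log v) := by
    have := huv
    ring_nf at this ⊢
    linear_combination this
  -- bound |log u - log v|
  have hlog : ‖Complex.log u - Complex.log v‖
      ≤ (1 + Real.pi) / R * ‖u - v‖ := by
    have hre : (Complex.log u - Complex.log v).re
        = Real.log (‖u‖) - Real.log (‖v‖) := by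
      simp [Complex.log_re]
    have him : (Complex.log u - Complex.log v).im = Complex.arg u - Complex.arg v := by
      simp [Complex.log_im]
    have h1 := Complex.norm_le_abs_re_add_abs_im (Complex.log u - Complex.log v)
    rw [hre, him] at h1
    have h2 := log_abs_diff_le hR hu.1.le hv.1.le
    have h3 : |Complex.arg u - Complex.arg v| ≤ Real.pi / R * ‖u - v‖ := by
      rw [abs_le]
      constructor
      · have := arg_diff_le hR hv.1 hv.2 hu.1 hu.2
        rw [show ‖v - u‖ = ‖u - v‖ from norm_sub_rev v u] at this
        linarith
      · exact arg_diff_le hR hu.1 hu.2 hv.1 hv.2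
    calc ‖Complex.log u - Complex.log v‖
        ≤ |Real.log (‖u‖) - Real.log (‖v‖)| + |Complex.arg u - Complex.arg v| := h1
      _ ≤ ‖u - v‖ / R + Real.pi / R * ‖u - v‖ := add_le_add h2 h3
      _ = (1 + Real.pi) / R * ‖u - v‖ := by field_simp
  -- conclude
  have hbound : ‖u - v‖ ≤ ‖γ‖ * ((1 + Real.pi) / R * ‖u - v‖) := by
    conv_lhs => rw [heq]
    rw [norm_mul]
    exact mul_le_mul_of_nonneg_left hlog (norm_nonneg γ)
  have hγ' : ‖γ‖ * ((1 + Real.pi) / R) < 1 := by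
    have hγle : ‖γ‖ ≤ R / (4 * Real.pi) := by
      rw [le_div_iff₀ (by positivity)]
      linarith [hγ]
    have : ‖γ‖ * ((1 + Real.pi) / R) ≤ R / (4 * Real.pi) * ((1 + Real.pi) / R) := by
      apply mul_le_mul_of_nonneg_right hγle (by positivity)
    have heq2 : R / (4 * Real.pi) * ((1 + Real.pi) / R) = (1 + Real.pi) / (4 * Real.pi) := by
      field_simp
    have hlt : (1 + Real.pi) / (4 * Real.pi) < 1 := by
      rw [div_lt_one (by positivity)]
      nlinarith [Real.pi_gt_three]
    linarith
  have h0 : ‖u - v‖ = 0 := by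
    by_contra h
    have hpos : 0 < ‖u - v‖ := lt_of_le_of_ne (norm_nonneg _) (Ne.symm h)
    have : ‖u - v‖ ≤ ‖γ‖ * ((1 + Real.pi) / R) * ‖u - v‖ := by
      calc ‖u - v‖ ≤ ‖γ‖ * ((1 + Real.pi) / R * ‖u - v‖) := hbound
        _ = ‖γ‖ * ((1 + Real.pi) / R) * ‖u - v‖ := by ring
    nlinarith
  have := norm_eq_zero.mp h0
  exact sub_eq_zero.mp this
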